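/- Let f be an element of the disk algebra A(𝔻). Then f is a topological divisor of zero in A(𝔻) if and only if there exists a point z₀ with |z₀| = 1 such that f(z₀) = 0. -/

import Mathlib

open Filter

/-- The sup-norm over the closed unit disk. -/
noncomputable def diskSupNorm (f : ℂ → ℂ) : ℝ :=
  sSup ((fun z => ‖f z‖) '' Metric.closedBall (0 : ℂ) 1)

/-- Membership in the disk algebra `A(𝔻)`: continuous on the closed unit disk and
analytic on the open unit disk. -/
def MemDiskAlgebra (f : ℂ → ℂ) : Prop :=
  ContinuousOn f (Metric.closedBall (0 : ℂ) 1) ∧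
    DifferentiableOn ℂ f (Metric.ball (0 : ℂ) 1)

/-- `f` is a topological divisor of zero in the (commutative) Banach algebra `A(𝔻)`:
there is a sequence of elements of `A(𝔻)` of norm one whose products with `f`
tend to zero in norm. -/
def IsTDZDiskAlgebra (f : ℂ → ℂ) : Prop :=
  ∃ g : ℕ → ℂ → ℂ,
    (∀ n, MemDiskAlgebra (g n) ∧ diskSupNorm (g n) = 1) ∧
    (Tendsto (fun n => diskSupNorm (fun z => f z * g n z)) atTop (nhds 0) ∨
      Tendsto (fun n => diskSupNorm (fun z => g n z * f z)) atTop (nhds 0))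

local notation "K" => Metric.closedBall (0 : ℂ) 1

lemma diskBdd {f : ℂ → ℂ} (hf : ContinuousOn f K) :
    BddAbove ((fun z => ‖f z‖) '' K) :=
  ((isCompact_closedBall _ _).image_of_continuousOn hf.norm).bddAbove

lemma le_diskSupNorm {f : ℂ → ℂ} (hf : ContinuousOn f K) {z : ℂ} (hz : z ∈ K) :
    ‖f z‖ ≤ diskSupNorm f :=
  le_csSup (diskBdd hf) ⟨z, hz, rfl⟩

lemma diskSupNorm_le {f : ℂ → ℂ} {C : ℝ} (hC : 0 ≤ C)
    (h : ∀ z ∈ K, ‖f z‖ ≤ C) : diskSupNorm f ≤ C :=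
  Real.sSup_le (by rintro x ⟨z, hz, rfl⟩; exact h z hz) hC

lemma keyStrict {z z₀ : ℂ} (hz : ‖z‖ ≤ 1) (h0 : ‖z₀‖ = 1) (hne : z ≠ z₀) :
    ‖(z * (starRingEnd ℂ) z₀ + 1) / 2‖ < 1 := by
  set w := z * (starRingEnd ℂ) z₀ with hw
  have hwn : ‖w‖ ≤ 1 := by
    rw [hw, norm_mul, RCLike.norm_conj, h0, mul_one]; exact hz
  have hw1 : w ≠ 1 := by
    intro h
    apply hne
    have : z * ((starRingEnd ℂ) z₀ * z₀) = z₀ := by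
      rw [← mul_assoc, ← hw, h, one_mul]
    rw [Complex.conj_mul', h0] at this
    simpa using this
  have hre : w.re ≤ 1 := (Complex.re_le_norm w).trans hwn
  have hlt : Complex.normSq (w + 1) < 4 := by
    rw [Complex.normSq_add]
    simp only [map_one, mul_one, Complex.normSq_one, Complex.one_re]
    have hns : Complex.normSq w ≤ 1 := by
      rw [Complex.normSq_eq_norm_sq]
      have haw : ‖w‖ ≤ 1 := hwn
      nlinarith [norm_nonneg w]
    rcases lt_or_eq_of_le hre with h | h
    · nlinarith
    · exfalso
      have him : w.im = 0 := by
        have := Complex.normSq_apply w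
        nlinarith [sq_nonneg w.im]
      exact hw1 (Complex.ext (by simpa using h) (by simpa using him))
  have h2 : ‖w + 1‖ < 2 := by
    have := Complex.normSq_eq_norm_sq (w + 1)
    have hnn := norm_nonneg (w + 1)
    nlinarith
  calc ‖(w + 1) / 2‖ = ‖w + 1‖ / 2 := by
        rw [norm_div]; norm_num
    _ < 1 := by linarith

lemma mem_K_iff {z : ℂ} : z ∈ K ↔ ‖z‖ ≤ 1 := by
  simp [Metric.mem_closedBall, Complex.dist_eq]

lemma backward (f : ℂ → ℂ) (hf : MemDiskAlgebra f) (z₀ : ℂ)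
    (h0 : ‖z₀‖ = 1) (hf0 : f z₀ = 0) : IsTDZDiskAlgebra f := by
  have h0' : ‖z₀‖ = 1 := h0
  have hz₀K : z₀ ∈ K := mem_K_iff.mpr h0'.le
  set q : ℂ → ℂ := fun z => (z * (starRingEnd ℂ) z₀ + 1) / 2 with hq
  have hq1 : ∀ z ∈ K, ‖q z‖ ≤ 1 := by
    intro z hz
    rw [hq]
    rw [norm_div, show ‖(2:ℂ)‖ = 2 by norm_num, div_le_one (by norm_num : (0:ℝ) < 2)]
    calc ‖z * (starRingEnd ℂ) z₀ + 1‖ ≤ ‖z * (starRingEnd ℂ) z₀‖ + ‖(1:ℂ)‖ := norm_add_le _ _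
      _ ≤ 1 * 1 + 1 := by
          rw [norm_mul, RCLike.norm_conj, h0', norm_one, mul_one]
          have := mem_K_iff.mp hz
          linarith
      _ = 2 := by norm_num
  have hqz₀ : q z₀ = 1 := by
    rw [hq]
    simp only
    rw [Complex.mul_conj', h0']
    norm_num
  have hqc : Continuous q := by
    apply Continuous.div_const
    exact (continuous_id.mul continuous_const).add continuous_const
  have hqd : Differentiable ℂ q := by
    apply Differentiable.div_const
    exact (differentiable_id.mul_const _).add_const _
  refine ⟨fun n z => (q z) ^ n, fun n => ⟨⟨(hqc.pow n).continuousOn, (hqd.pow n).differentiableOn⟩, ?_⟩, Or.inl ?_⟩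
  · -- diskSupNorm (q ^ n) = 1
    apply le_antisymm
    · exact diskSupNorm_le zero_le_one fun z hz => by
        rw [norm_pow]; exact pow_le_one₀ (norm_nonneg _) (hq1 z hz)
    · have := le_diskSupNorm (f := fun z => (q z) ^ n) (hqc.pow n).continuousOn hz₀K
      simp only [hqz₀, one_pow, norm_one] at this
      exact this
  · -- tendsto
    rw [Metric.tendsto_atTop]
    intro ε hε
    -- continuity of f at z₀ within K
    have hcw : ContinuousWithinAt f K z₀ := hf.1 z₀ hz₀K
    rw [Metric.continuousWithinAt_iff] at hcw
    obtain ⟨δ₀, hδ₀, hδ⟩ := hcw (ε / 2) (by linarith)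
    set δ := min δ₀ 1 with hδdef
    have hδpos : 0 < δ := lt_min hδ₀ one_pos
    -- the compact set away from z₀
    set S : Set ℂ := K ∩ {z | δ ≤ dist z z₀} with hS
    have hScomp : IsCompact S :=
      (isCompact_closedBall _ _).inter_right
        (isClosed_le continuous_const (continuous_id.dist continuous_const))
    have hSne : S.Nonempty := by
      refine ⟨-z₀, mem_K_iff.mpr (by rw [norm_neg, h0']), ?_⟩
      simp only [Set.mem_setOf_eq, dist_eq_norm]
      have : ‖-z₀ - z₀‖ = 2 := by
        rw [show -z₀ - z₀ = -(2 * z₀) by ring, norm_neg, norm_mul, h0']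
        norm_num
      rw [this]
      exact (min_le_right _ _).trans (by norm_num)
    obtain ⟨zm, hzmS, hzm⟩ := hScomp.exists_isMaxOn hSne hqc.norm.continuousOn
    set r : ℝ := ‖q zm‖ with hr
    have hr0 : 0 ≤ r := norm_nonneg _
    have hr1 : r < 1 := by
      apply keyStrict (mem_K_iff.mp hzmS.1) h0'
      intro h
      have := hzmS.2
      rw [h] at this
      simp only [Set.mem_setOf_eq, dist_self] at this
      linarith
    -- the bound on f
    set M : ℝ := diskSupNorm f with hM
    have hMb : ∀ z ∈ K, ‖f z‖ ≤ M := fun z hz => le_diskSupNorm hf.1 hz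
    have hM0 : 0 ≤ M := le_trans (norm_nonneg (f 0)) (hMb 0 (mem_K_iff.mpr (by simp)))
    -- M * r ^ n → 0, so pick N
    have htend : Tendsto (fun n : ℕ => M * r ^ n) atTop (nhds 0) := by
      have := tendsto_pow_atTop_nhds_zero_of_lt_one hr0 hr1
      simpa using this.const_mul M
    rw [Metric.tendsto_atTop] at htend
    obtain ⟨N, hN⟩ := htend (ε / 2) (by linarith)
    refine ⟨N, fun n hn => ?_⟩
    have hNn := hN n hn
    rw [Real.dist_eq, sub_zero, abs_of_nonneg (by positivity)] at hNn
    have hbound : diskSupNorm (fun z => f z * q z ^ n) ≤ ε / 2 := by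
      apply diskSupNorm_le (by linarith)
      intro z hz
      rw [norm_mul, norm_pow]
      rcases lt_or_ge (dist z z₀) δ with hcase | hcase
      · -- close to z₀ : |f z| < ε/2
        have hfz : ‖f z‖ < ε / 2 := by
          have := hδ hz (hcase.trans_le (min_le_left _ _))
          rwa [hf0, dist_zero_right] at this
        calc ‖f z‖ * ‖q z‖ ^ n ≤ ‖f z‖ * 1 := by
              gcongr
              exact pow_le_one₀ (norm_nonneg _) (hq1 z hz)
          _ ≤ ε / 2 := by rw [mul_one]; linarith
      · -- far from z₀ : |q z|^n ≤ r^n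
        have hzS : z ∈ S := ⟨hz, hcase⟩
        have hqzr : ‖q z‖ ≤ r := hzm hzS
        calc ‖f z‖ * ‖q z‖ ^ n ≤ M * r ^ n := by
              have h1 : ‖q z‖ ^ n ≤ r ^ n := pow_le_pow_left₀ (norm_nonneg _) hqzr n
              have h2 : (0:ℝ) ≤ r ^ n := pow_nonneg hr0 n
              nlinarith [hMb z hz, norm_nonneg (f z), pow_nonneg (norm_nonneg (q z)) n]
          _ ≤ ε / 2 := hNn.le
    rw [Real.dist_eq, sub_zero]
    have h0K : (0:ℂ) ∈ K := mem_K_iff.mpr (by simp)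
    have hnn : 0 ≤ diskSupNorm (fun z => f z * q z ^ n) :=
      le_trans (norm_nonneg (f 0 * q 0 ^ n)) (le_diskSupNorm (hf.1.mul (hqc.pow n).continuousOn) h0K)
    rw [abs_of_nonneg hnn]
    linarith

lemma forward (f : ℂ → ℂ) (hf : MemDiskAlgebra f) (htdz : IsTDZDiskAlgebra f) :
    ∃ z₀ : ℂ, ‖z₀‖ = 1 ∧ f z₀ = 0 := by
  by_contra hno
  push_neg at hno
  -- min of ‖f‖ on the sphere
  have hsub : Metric.sphere (0:ℂ) 1 ⊆ K := Metric.sphere_subset_closedBall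
  have hsne : (Metric.sphere (0:ℂ) 1).Nonempty := ⟨1, by simp⟩
  obtain ⟨zmin, hzmin, hmin⟩ := (isCompact_sphere (0:ℂ) 1).exists_isMinOn hsne
    ((hf.1.mono hsub).norm)
  set m : ℝ := ‖f zmin‖ with hm
  have hzmin' : ‖zmin‖ = 1 := by
    simpa [Complex.dist_eq] using hzmin
  have hmpos : 0 < m := norm_pos_iff.mpr (hno zmin hzmin')
  obtain ⟨g, hg, hT⟩ := htdz
  have hT' : Tendsto (fun n => diskSupNorm (fun z => f z * g n z)) atTop (nhds 0) := by
    rcases hT with h | h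
    · exact h
    · simpa only [mul_comm] using h
  rw [Metric.tendsto_atTop] at hT'
  obtain ⟨N, hN⟩ := hT' m hmpos
  have hNN := hN N le_rfl
  rw [Real.dist_eq, sub_zero] at hNN
  set S : ℝ := diskSupNorm (fun z => f z * g N z) with hSdef
  have hprodcont : ContinuousOn (fun z => f z * g N z) K := hf.1.mul (hg N).1.1
  have hS0 : 0 ≤ S := le_trans (norm_nonneg (f 0 * g N 0))
    (le_diskSupNorm hprodcont (mem_K_iff.mpr (by simp)))
  rw [abs_of_nonneg hS0] at hNN
  -- on the sphere, ‖g N z‖ ≤ S / m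
  have hbnd : ∀ z ∈ Metric.sphere (0:ℂ) 1, ‖g N z‖ ≤ S / m := by
    intro z hz
    rw [le_div_iff₀ hmpos]
    calc ‖g N z‖ * m ≤ ‖g N z‖ * ‖f z‖ := by
          gcongr
          exact hmin hz
      _ = ‖f z * g N z‖ := by rw [norm_mul, mul_comm]
      _ ≤ S := le_diskSupNorm hprodcont (hsub hz)
  -- maximum modulus principle
  have hmax : ∀ z ∈ K, ‖g N z‖ ≤ S / m := by
    intro z hz
    have hd : DiffContOnCl ℂ (g N) (Metric.ball (0:ℂ) 1) := by
      refine ⟨(hg N).1.2, ?_⟩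
      rw [closure_ball (0:ℂ) one_ne_zero]
      exact (hg N).1.1
    apply Complex.norm_le_of_forall_mem_frontier_norm_le
      Metric.isBounded_ball hd
    · intro w hw
      rw [frontier_ball (0:ℂ) one_ne_zero] at hw
      exact hbnd w hw
    · rwa [closure_ball (0:ℂ) one_ne_zero]
  have h1 : diskSupNorm (g N) ≤ S / m :=
    diskSupNorm_le (div_nonneg hS0 hmpos.le) hmax
  rw [(hg N).2] at h1
  rw [le_div_iff₀ hmpos, one_mul] at h1
  linarith

/-- An element `f ∈ A(𝔻)` is a topological divisor of zero if and only if
there exists `z₀ ∈ 𝕋` (the unit circle) such that `f z₀ = 0`. -/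
theorem tdz_diskAlgebra_iff_exists_zero_on_circle (f : ℂ → ℂ) (hf : MemDiskAlgebra f) :
    IsTDZDiskAlgebra f ↔ ∃ z₀ : ℂ, ‖z₀‖ = 1 ∧ f z₀ = 0 := by
  constructor
  · exact forward f hf
  · rintro ⟨z₀, h0, hf0⟩
    exact backward f hf z₀ h0 hf0
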